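/- Let n ≥ 1 and k ≥ 2 be integers, and let L(n,k) denote the number of parts of the greedy partition of n defined by μ_1 = ⌈n/k⌉ and μ_i = ⌈(n − Σ_{j<i} μ_j)/k⌉ for i > 1 (stopping when the remainder reaches 0). Then L(n,k) ≤ ⌈log_{k/(k−1)}(n)⌉ + 1. -/

import Mathlib

/-- A partition of `n`: a multiset of positive integers summing to `n`. -/
def IsPartition (n : ℕ) (lam : Multiset ℕ) : Prop :=
  (∀ x ∈ lam, 0 < x) ∧ lam.sum = n

/-- `μ` generates `lam`: `μ` decomposes into disjoint sub-multisets, one summing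
to each part of `lam`. -/
def Generates (μ lam : Multiset ℕ) : Prop :=
  ∃ P : Multiset (Multiset ℕ), P.sum = μ ∧ P.map Multiset.sum = lam

/-- `μ` generates all partitions of `n` with at most `k` parts. -/
def GeneratesAll (n k : ℕ) (μ : Multiset ℕ) : Prop :=
  ∀ lam : Multiset ℕ, IsPartition n lam → Multiset.card lam ≤ k → Generates μ lam

/-- The greedy partition: repeatedly take `⌈remainder / k⌉`. -/
def greedyList (k : ℕ) : ℕ → List ℕ
  | 0 => []
  | (n + 1) =>
    if hk : k = 0 then []
    else (n + k) / k :: greedyList k (n + 1 - (n + k) / k)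
  termination_by n => n
  decreasing_by
    have h1 : 1 ≤ (n + k) / k :=
      (Nat.one_le_div_iff (Nat.pos_of_ne_zero hk)).mpr (Nat.le_add_left k n)
    omega

lemma greedy_aux (k : ℕ) (hk : 2 ≤ k) : ∀ n, 1 ≤ n →
    ((greedyList k n).length : ℤ) ≤
      ⌈Real.logb ((k : ℝ) / ((k : ℝ) - 1)) (n : ℝ)⌉ + 1 := by
  have hkR : (1 : ℝ) < (k : ℝ) := by exact_mod_cast Nat.lt_of_lt_of_le one_lt_two hk
  set q : ℝ := (k : ℝ) / ((k : ℝ) - 1) with hqdef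
  have hq : 1 < q := (one_lt_div (by linarith)).mpr (by linarith)
  intro n
  induction n using Nat.strong_induction_on with
  | _ n IH =>
    intro hn
    obtain ⟨m, rfl⟩ : ∃ m, n = m + 1 := ⟨n - 1, by omega⟩
    have hk0 : k ≠ 0 := by omega
    rw [greedyList, dif_neg hk0]
    have hdm := Nat.div_add_mod (m + k) k
    have hmod := Nat.mod_lt (m + k) (show 0 < k by omega)
    set c := (m + k) / k with hc
    have hkc : m + 1 ≤ k * c := by omega
    have hc1 : 1 ≤ c := by nlinarith
    have hcle : c ≤ m + 1 := by
      have h1 : m + k ≤ k * (m + 1) := by nlinarith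
      have h2 : c ≤ (k * (m + 1)) / k := by rw [hc]; exact Nat.div_le_div_right h1
      rwa [Nat.mul_div_cancel_left _ (show 0 < k by omega)] at h2
    set r := m + 1 - c with hr
    rcases Nat.eq_zero_or_pos r with h0 | hr1
    · rw [h0]
      simp only [greedyList, List.length_cons, List.length_nil]
      have hlb : (0 : ℝ) ≤ Real.logb q (((m : ℕ) : ℝ) + 1) := by
        apply Real.logb_nonneg hq
        have : (0:ℝ) ≤ (m:ℝ) := Nat.cast_nonneg m
        linarith
      have h2 : (0 : ℤ) ≤ ⌈Real.logb q (((m : ℕ) : ℝ) + 1)⌉ := Int.ceil_nonneg hlb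
      push_cast at h2 ⊢
      omega
    · have hrlt : r < m + 1 := by omega
      have hIH := IH r hrlt hr1
      have hkey : (r : ℝ) ≤ ((m : ℝ) + 1) / q := by
        rw [hqdef, div_div_eq_mul_div, le_div_iff₀ (by linarith)]
        have hrc : r + c = m + 1 := by omega
        have hkcR : ((m : ℝ) + 1) ≤ (k : ℝ) * (c : ℝ) := by exact_mod_cast hkc
        have hrcR : (r : ℝ) + (c : ℝ) = (m : ℝ) + 1 := by exact_mod_cast hrc
        nlinarith
      have hlog : Real.logb q (r : ℝ) ≤ Real.logb q ((m : ℝ) + 1) - 1 := by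
        have h1 : Real.logb q (r : ℝ) ≤ Real.logb q (((m : ℝ) + 1) / q) := by
          apply Real.logb_le_logb_of_le hq _ hkey
          exact_mod_cast hr1
        rwa [Real.logb_div (by positivity) (by positivity),
          Real.logb_self_eq_one hq] at h1
      have hceil : ⌈Real.logb q (r : ℝ)⌉ ≤ ⌈Real.logb q ((m : ℝ) + 1)⌉ - 1 := by
        have h2 := Int.ceil_mono hlog
        rwa [show Real.logb q ((m : ℝ) + 1) - 1 = Real.logb q ((m : ℝ) + 1) - ((1 : ℤ) : ℝ) by
          push_cast; ring, Int.ceil_sub_intCast] at h2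
      simp only [List.length_cons]
      push_cast at hIH ⊢
      omega

/-- the number of parts of the greedy partition is at most
`⌈log_{k/(k-1)} n⌉ + 1`. -/
theorem greedy_length_le_log (n k : ℕ) (hn : 1 ≤ n) (hk : 2 ≤ k) :
    ((greedyList k n).length : ℤ) ≤
      ⌈Real.logb ((k : ℝ) / ((k : ℝ) - 1)) (n : ℝ)⌉ + 1 := by
  exact greedy_aux k hk n hn
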